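/- Let p < r, let α_1, …, α_p ∈ ℕ^r be linearly independent over ℚ, and let a ∈ (0,1)^r. Then there exists u ∈ (0,1]^r such that u_i = 1 for some index i and u^{α_j} = a^{α_j} for every j = 1, …, p. (Every fibre of the positive monomial map through a point of the open unit cube meets the boundary of the cube within the open positive orthant.) -/

import Mathlib

/-- Every fibre of the positive monomial map through a point of the open unit cube meets the
boundary of the cube within the open positive orthant: for `p < r`, `α_1,…,α_p ∈ ℕ^r`
linearly independent over `ℚ`, and `a ∈ (0,1)^r`, there is `u ∈ (0,1]^r` with some `u_i = 1`
and `u^{α_j} = a^{α_j}` for all `j`. -/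
theorem monomial_fibre_meets_cube_boundary (p r : ℕ) (hpr : p < r)
    (α : Fin p → Fin r → ℕ)
    (hα : LinearIndependent ℚ fun j : Fin p => fun i : Fin r => (α j i : ℚ))
    (a : Fin r → ℝ) (ha : ∀ i, 0 < a i ∧ a i < 1) :
    ∃ u : Fin r → ℝ, (∀ i, 0 < u i ∧ u i ≤ 1) ∧ (∃ i, u i = 1) ∧
      ∀ j : Fin p, (∏ i, u i ^ α j i) = ∏ i, a i ^ α j i := by
  -- the coefficient matrix as a linear map
  set M : Matrix (Fin p) (Fin r) ℝ := fun j i => (α j i : ℝ) with hM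
  have hnotinj : ¬ Function.Injective M.mulVecLin := by
    intro hinj
    have := LinearMap.finrank_le_finrank_of_injective hinj
    simp [Module.finrank_pi] at this
    omega
  have hker : ∃ v : Fin r → ℝ, v ≠ 0 ∧ ∀ j, ∑ i, (α j i : ℝ) * v i = 0 := by
    rw [← LinearMap.ker_eq_bot] at hnotinj
    obtain ⟨v, hv, hv0⟩ := Submodule.exists_mem_ne_zero_of_ne_bot hnotinj
    refine ⟨v, hv0, fun j => ?_⟩
    have := congrFun (show M.mulVec v = 0 from LinearMap.mem_ker.mp hv) j
    simpa [Matrix.mulVecLin_apply, Matrix.mulVec, dotProduct, hM] using this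
  obtain ⟨v, hv0, hvker⟩ := hker
  -- WLOG v has a positive coordinate
  have hpos : ∃ w : Fin r → ℝ, (∃ i, 0 < w i) ∧ ∀ j, ∑ i, (α j i : ℝ) * w i = 0 := by
    obtain ⟨i, hi⟩ := Function.ne_iff.mp hv0
    rcases lt_or_gt_of_ne (by simpa using hi) with h | h
    · exact ⟨-v, ⟨i, by simpa using h⟩, fun j => by
        simp only [Pi.neg_apply, mul_neg, Finset.sum_neg_distrib, hvker j, neg_zero]⟩
    · exact ⟨v, ⟨i, h⟩, hvker⟩
  obtain ⟨w, ⟨i₁, hi₁⟩, hwker⟩ := hpos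
  set x : Fin r → ℝ := fun i => Real.log (a i) with hx
  have hxneg : ∀ i, x i < 0 := fun i => Real.log_neg (ha i).1 (ha i).2
  -- minimize (-x i)/w i over positive coordinates
  set T : Finset (Fin r) := Finset.univ.filter fun i => 0 < w i with hT
  have hTne : T.Nonempty := ⟨i₁, by simp [hT, hi₁]⟩
  obtain ⟨i₀, hi₀T, hmin⟩ := T.exists_min_image (fun i => (-x i) / w i) hTne
  have hwi₀ : 0 < w i₀ := by simpa [hT] using hi₀T
  set t : ℝ := (-x i₀) / w i₀ with ht
  have htpos : 0 < t := div_pos (by linarith [hxneg i₀]) hwi₀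
  set y : Fin r → ℝ := fun i => x i + t * w i with hy
  have hyle : ∀ i, y i ≤ 0 := by
    intro i
    by_cases h : 0 < w i
    · have ht' : t ≤ (-x i) / w i := hmin i (by simp [hT, h])
      have : t * w i ≤ -x i := (le_div_iff₀ h).mp ht'
      simp only [hy]; linarith
    · push_neg at h
      have : t * w i ≤ 0 := mul_nonpos_of_nonneg_of_nonpos htpos.le h
      have := hxneg i
      simp only [hy]; linarith
  have hyi₀ : y i₀ = 0 := by
    simp only [hy, ht]
    field_simp
    ring
  refine ⟨fun i => Real.exp (y i), fun i => ⟨Real.exp_pos _, by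
      simpa using Real.exp_le_exp.mpr (hyle i)⟩, ⟨i₀, by simp [hyi₀]⟩, fun j => ?_⟩
  have key : ∑ i, (α j i : ℝ) * y i = ∑ i, (α j i : ℝ) * x i := by
    simp only [hy, mul_add, Finset.sum_add_distrib]
    have : ∑ i, (α j i : ℝ) * (t * w i) = t * ∑ i, (α j i : ℝ) * w i := by
      rw [Finset.mul_sum]; congr 1; ext i; ring
    rw [this, hwker j]; ring
  calc ∏ i, Real.exp (y i) ^ α j i = ∏ i, Real.exp ((α j i : ℝ) * y i) := by
        simp [← Real.exp_nat_mul]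
    _ = Real.exp (∑ i, (α j i : ℝ) * y i) := by rw [Real.exp_sum]
    _ = Real.exp (∑ i, (α j i : ℝ) * x i) := by rw [key]
    _ = ∏ i, Real.exp ((α j i : ℝ) * x i) := by rw [Real.exp_sum]
    _ = ∏ i, a i ^ α j i := by
        refine Finset.prod_congr rfl fun i _ => ?_
        rw [hx, mul_comm, Real.exp_mul, Real.exp_log (ha i).1, Real.rpow_natCast]
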